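/- In the category Graph of directed multigraphs, for every AC ac_P over a finite graph P all of whose constituent graphs are finite and every morphism b : P → P' with P' finite, there exists an AC Shift(b, ac_P) over P' (again with finite constituent graphs) such that for every graph H and every morphism n : P' → H: n ∘ b ⊨ ac_P if and only if n ⊨ Shift(b, ac_P). -/

import Mathlib

open CategoryTheory CategoryTheory.Limits

universe v u

variable {C : Type u} [Category.{v} C]

/-- A plain rule: a span `L ⟵l I ⟶r R` with `l` and `r` monomorphisms. -/
structure PlainRule (C : Type u) [Category.{v} C] : Type (max u v) where
  L : C
  I : C
  R : C
  l : I ⟶ L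
  r : I ⟶ R
  mono_l : Mono l
  mono_r : Mono r

/-- An AC-disregarding direct transformation `G ⇒_(p,m) H`: a double pushout with
context `D`, match `m` and comatch `cm`. -/
structure Trafo (p : PlainRule C) (G H : C) : Type (max u v) where
  m : p.L ⟶ G
  D : C
  f : p.I ⟶ D
  k : D ⟶ G
  c : D ⟶ H
  cm : p.R ⟶ H
  po1 : IsPushout p.l f m k
  po2 : IsPushout p.r f cm c

/-- A pair of AC-disregarding transformations `H₁ ⇐_(p₁,m₁) G ⇒_(p₂,m₂) H₂`. -/
structure TrafoPair (p₁ p₂ : PlainRule C) : Type (max u v) where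
  H₁ : C
  G : C
  H₂ : C
  t₁ : Trafo p₁ G H₁
  t₂ : Trafo p₂ G H₂

/-- An extension diagram embedding `t'` into `t` via extension morphism `ext`. -/
structure TrafoEmbedding {p : PlainRule C} {G' H' G H : C}
    (t' : Trafo p G' H') (t : Trafo p G H) (ext : G' ⟶ G) : Type (max u v) where
  d : t'.D ⟶ t.D
  h : H' ⟶ H
  match_eq : t'.m ≫ ext = t.m
  f_eq : t'.f ≫ d = t.f
  po1 : IsPushout t'.k d ext t.k
  po2 : IsPushout t'.c d h t.c

/-- A transformation pair embedded into another via a common extension morphism. -/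
structure PairEmbedding {p₁ p₂ : PlainRule C} (tp' tp : TrafoPair p₁ p₂)
    (ext : tp'.G ⟶ tp.G) : Type (max u v) where
  e₁ : TrafoEmbedding tp'.t₁ tp.t₁ ext
  e₂ : TrafoEmbedding tp'.t₂ tp.t₂ ext

/-- Parallel independence of a plain transformation pair. -/
def TrafoPair.ParallelIndep {p₁ p₂ : PlainRule C} (tp : TrafoPair p₁ p₂) : Prop :=
  (∃ d₁₂ : p₁.L ⟶ tp.t₂.D, d₁₂ ≫ tp.t₂.k = tp.t₁.m) ∧
  (∃ d₂₁ : p₂.L ⟶ tp.t₁.D, d₂₁ ≫ tp.t₁.k = tp.t₂.m)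

/-- Use-delete conflict: no commuting morphism `d₁₂ : L₁ ⟶ D₂` exists. -/
def TrafoPair.UseDelete {p₁ p₂ : PlainRule C} (tp : TrafoPair p₁ p₂) : Prop :=
  ¬ ∃ d₁₂ : p₁.L ⟶ tp.t₂.D, d₁₂ ≫ tp.t₂.k = tp.t₁.m

/-- Delete-use conflict: no commuting morphism `d₂₁ : L₂ ⟶ D₁` exists. -/
def TrafoPair.DeleteUse {p₁ p₂ : PlainRule C} (tp : TrafoPair p₁ p₂) : Prop :=
  ¬ ∃ d₂₁ : p₂.L ⟶ tp.t₁.D, d₂₁ ≫ tp.t₁.k = tp.t₂.m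

/-- A transformation pair is in conflict (parallel dependent) if it is not
parallel independent. -/
def TrafoPair.InConflict {p₁ p₂ : PlainRule C} (tp : TrafoPair p₁ p₂) : Prop :=
  ¬ tp.ParallelIndep

/-- `tpI` is an initial transformation pair for `tp`. -/
def IsInitialTrafoPairFor {p₁ p₂ : PlainRule C} (tpI tp : TrafoPair p₁ p₂) : Prop :=
  ∃ fI : tpI.G ⟶ tp.G, Nonempty (PairEmbedding tpI tp fI) ∧
    ∀ (tp' : TrafoPair p₁ p₂) (f : tp'.G ⟶ tp.G), PairEmbedding tp' tp f →
      ∃! g : tpI.G ⟶ tp'.G, Nonempty (PairEmbedding tpI tp' g) ∧ g ≫ f = fI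

/-- Two transformation pairs are isomorphic if each is embedded into the other via
an isomorphism as extension morphism. -/
def PairIso {p₁ p₂ : PlainRule C} (tp tp' : TrafoPair p₁ p₂) : Prop :=
  (∃ e : tp.G ⟶ tp'.G, IsIso e ∧ Nonempty (PairEmbedding tp tp' e)) ∧
  (∃ e' : tp'.G ⟶ tp.G, IsIso e' ∧ Nonempty (PairEmbedding tp' tp e'))

section Coproducts

variable [HasBinaryCoproducts C]

lemma isPushout_coprod_left {A B X : C} (g : A ⟶ B) :
    IsPushout g (coprod.inl : A ⟶ A ⨿ X) (coprod.inl : B ⟶ B ⨿ X)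
      (coprod.map g (𝟙 X)) := by
  have w : CommSq g (coprod.inl : A ⟶ A ⨿ X) (coprod.inl : B ⟶ B ⨿ X)
      (coprod.map g (𝟙 X)) := ⟨by simp⟩
  refine IsPushout.of_isColimit' w ?_
  have key : ∀ {Z : C} (u : B ⟶ Z) (v : A ⨿ X ⟶ Z), g ≫ u = coprod.inl ≫ v →
      coprod.map g (𝟙 X) ≫ coprod.desc u (coprod.inr ≫ v) = v := by
    intro Z u v h
    apply coprod.hom_ext
    · rw [coprod.inl_map_assoc, coprod.inl_desc, h]
    · rw [coprod.inr_map_assoc, coprod.inr_desc, Category.id_comp]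
  have key2 : ∀ {Z : C} (u : B ⟶ Z) (v : A ⨿ X ⟶ Z) (mm : B ⨿ X ⟶ Z),
      coprod.inl ≫ mm = u → coprod.map g (𝟙 X) ≫ mm = v →
      mm = coprod.desc u (coprod.inr ≫ v) := by
    intro Z u v mm h1 h2
    apply coprod.hom_ext
    · rw [coprod.inl_desc, h1]
    · rw [coprod.inr_desc, ← h2, coprod.inr_map_assoc, Category.id_comp]
  exact PushoutCocone.IsColimit.mk w.w
    (fun s => coprod.desc s.inl (coprod.inr ≫ s.inr))
    (fun s => coprod.inl_desc _ _)
    (fun s => key s.inl s.inr s.condition)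
    (fun s mm h1 h2 => key2 s.inl s.inr mm h1 h2)

lemma isPushout_coprod_right {A B X : C} (g : A ⟶ B) :
    IsPushout g (coprod.inr : A ⟶ X ⨿ A) (coprod.inr : B ⟶ X ⨿ B)
      (coprod.map (𝟙 X) g) := by
  have w : CommSq g (coprod.inr : A ⟶ X ⨿ A) (coprod.inr : B ⟶ X ⨿ B)
      (coprod.map (𝟙 X) g) := ⟨by simp⟩
  refine IsPushout.of_isColimit' w ?_
  have key : ∀ {Z : C} (u : B ⟶ Z) (v : X ⨿ A ⟶ Z), g ≫ u = coprod.inr ≫ v →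
      coprod.map (𝟙 X) g ≫ coprod.desc (coprod.inl ≫ v) u = v := by
    intro Z u v h
    apply coprod.hom_ext
    · rw [coprod.inl_map_assoc, coprod.inl_desc, Category.id_comp]
    · rw [coprod.inr_map_assoc, coprod.inr_desc, h]
  have key2 : ∀ {Z : C} (u : B ⟶ Z) (v : X ⨿ A ⟶ Z) (mm : X ⨿ B ⟶ Z),
      coprod.inr ≫ mm = u → coprod.map (𝟙 X) g ≫ mm = v →
      mm = coprod.desc (coprod.inl ≫ v) u := by
    intro Z u v mm h1 h2
    apply coprod.hom_ext
    · rw [coprod.inl_desc, ← h2, coprod.inl_map_assoc, Category.id_comp]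
    · rw [coprod.inr_desc, h1]
  exact PushoutCocone.IsColimit.mk w.w
    (fun s => coprod.desc (coprod.inl ≫ s.inr) s.inl)
    (fun s => coprod.inr_desc _ _)
    (fun s => key s.inl s.inr s.condition)
    (fun s mm h1 h2 => key2 s.inl s.inr mm h1 h2)

/-- The transformation applying `p` at the coproduct injection `inl : L ⟶ L ⨿ X`. -/
noncomputable def coprodTrafoL (p : PlainRule C) (X : C) : Trafo p (p.L ⨿ X) (p.R ⨿ X) where
  m := coprod.inl
  D := p.I ⨿ X
  f := coprod.inl
  k := coprod.map p.l (𝟙 X)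
  c := coprod.map p.r (𝟙 X)
  cm := coprod.inl
  po1 := isPushout_coprod_left p.l
  po2 := isPushout_coprod_left p.r

/-- The transformation applying `p` at the coproduct injection `inr : L ⟶ X ⨿ L`. -/
noncomputable def coprodTrafoR (p : PlainRule C) (X : C) : Trafo p (X ⨿ p.L) (X ⨿ p.R) where
  m := coprod.inr
  D := X ⨿ p.I
  f := coprod.inr
  k := coprod.map (𝟙 X) p.l
  c := coprod.map (𝟙 X) p.r
  cm := coprod.inr
  po1 := isPushout_coprod_right p.l
  po2 := isPushout_coprod_right p.r

/-- The transformation pair `tp_(L₁+L₂) : R₁+L₂ ⇐_(p₁,i₁) L₁+L₂ ⇒_(p₂,i₂) L₁+R₂`. -/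
noncomputable def coprodPair (p₁ p₂ : PlainRule C) : TrafoPair p₁ p₂ where
  H₁ := p₁.R ⨿ p₂.L
  G := p₁.L ⨿ p₂.L
  H₂ := p₁.L ⨿ p₂.R
  t₁ := coprodTrafoL p₁ p₂.L
  t₂ := coprodTrafoR p₂ p₁.L

end Coproducts

/-! ## The category `MGraph` of directed multigraphs -/

/-- A directed multigraph: vertices, edges, and source/target maps. -/
structure MGraph : Type 1 where
  V : Type
  E : Type
  s : E → V
  t : E → V

/-- A morphism of directed multigraphs. -/
@[ext]
structure MGraphHom (G H : MGraph) where
  onV : G.V → H.V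
  onE : G.E → H.E
  comm_s : ∀ e, H.s (onE e) = onV (G.s e)
  comm_t : ∀ e, H.t (onE e) = onV (G.t e)

instance : Category MGraph where
  Hom := MGraphHom
  id G := ⟨fun v => v, fun e => e, fun _ => rfl, fun _ => rfl⟩
  comp f g := ⟨fun v => g.onV (f.onV v), fun e => g.onE (f.onE e),
    fun e => by rw [g.comm_s, f.comm_s], fun e => by rw [g.comm_t, f.comm_t]⟩

lemma MGraph.hom_ext' {G H : MGraph} {f g : G ⟶ H}
    (h1 : MGraphHom.onV f = MGraphHom.onV g) (h2 : MGraphHom.onE f = MGraphHom.onE g) :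
    f = g := MGraphHom.ext h1 h2

/-- A multigraph is finite if its vertex and edge types are finite. -/
def MGraph.Fin (G : MGraph) : Prop := Finite G.V ∧ Finite G.E

/-- The class `M` of injective multigraph morphisms. -/
def InjHom {G H : MGraph} (f : G ⟶ H) : Prop :=
  Function.Injective (MGraphHom.onV f) ∧ Function.Injective (MGraphHom.onE f)

/-- A pair of morphisms with common codomain is jointly surjective. -/
def JointlySurj {A B K : MGraph} (f : A ⟶ K) (g : B ⟶ K) : Prop :=
  (∀ v : K.V, (∃ a, MGraphHom.onV f a = v) ∨ (∃ b, MGraphHom.onV g b = v)) ∧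
  (∀ e : K.E, (∃ a, MGraphHom.onE f a = e) ∨ (∃ b, MGraphHom.onE g b = e))

/-! ### Binary coproducts of multigraphs -/

/-- Disjoint union of multigraphs. -/
def MGraph.sum (G H : MGraph) : MGraph where
  V := G.V ⊕ H.V
  E := G.E ⊕ H.E
  s := Sum.elim (fun e => Sum.inl (G.s e)) (fun e => Sum.inr (H.s e))
  t := Sum.elim (fun e => Sum.inl (G.t e)) (fun e => Sum.inr (H.t e))

def MGraph.inl' (G H : MGraph) : G ⟶ G.sum H :=
  ⟨Sum.inl, Sum.inl, fun _ => rfl, fun _ => rfl⟩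

def MGraph.inr' (G H : MGraph) : H ⟶ G.sum H :=
  ⟨Sum.inr, Sum.inr, fun _ => rfl, fun _ => rfl⟩

def MGraph.desc' {G H K : MGraph} (f : G ⟶ K) (g : H ⟶ K) : G.sum H ⟶ K where
  onV := Sum.elim (MGraphHom.onV f) (MGraphHom.onV g)
  onE := Sum.elim (MGraphHom.onE f) (MGraphHom.onE g)
  comm_s := by rintro (e | e) <;> simp [MGraph.sum, MGraphHom.comm_s]
  comm_t := by rintro (e | e) <;> simp [MGraph.sum, MGraphHom.comm_t]

lemma MGraph.inl'_desc' {G H K : MGraph} (f : G ⟶ K) (g : H ⟶ K) :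
    MGraph.inl' G H ≫ MGraph.desc' f g = f := by
  apply MGraph.hom_ext' <;> rfl

lemma MGraph.inr'_desc' {G H K : MGraph} (f : G ⟶ K) (g : H ⟶ K) :
    MGraph.inr' G H ≫ MGraph.desc' f g = g := by
  apply MGraph.hom_ext' <;> rfl

lemma MGraph.sum_hom_ext {G H K : MGraph} {f g : G.sum H ⟶ K}
    (h1 : MGraph.inl' G H ≫ f = MGraph.inl' G H ≫ g)
    (h2 : MGraph.inr' G H ≫ f = MGraph.inr' G H ≫ g) : f = g := by
  apply MGraph.hom_ext'
  · funext v
    rcases v with v | v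
    · exact congrFun (congrArg MGraphHom.onV h1) v
    · exact congrFun (congrArg MGraphHom.onV h2) v
  · funext e
    rcases e with e | e
    · exact congrFun (congrArg MGraphHom.onE h1) e
    · exact congrFun (congrArg MGraphHom.onE h2) e

def MGraph.sumCofanIsColimit (G H : MGraph) :
    IsColimit (BinaryCofan.mk (MGraph.inl' G H) (MGraph.inr' G H)) :=
  BinaryCofan.isColimitMk
    (fun s => MGraph.desc' s.inl s.inr)
    (fun s => MGraph.inl'_desc' _ _)
    (fun s => MGraph.inr'_desc' _ _)
    (fun s mm h1 h2 => by
      apply MGraph.sum_hom_ext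
      · rw [h1]; exact (MGraph.inl'_desc' _ _).symm
      · rw [h2]; exact (MGraph.inr'_desc' _ _).symm)

instance (G H : MGraph) : HasColimit (pair G H) :=
  HasColimit.mk ⟨_, MGraph.sumCofanIsColimit G H⟩

instance : HasBinaryCoproducts MGraph := hasBinaryCoproducts_of_hasColimit_pair MGraph

/-! ### Nested application conditions -/

/-- Nested application conditions over a multigraph. -/
inductive AC : MGraph → Type 1 where
  | tru : (P : MGraph) → AC P
  | ex : {P Q : MGraph} → (P ⟶ Q) → AC Q → AC P
  | neg : {P : MGraph} → AC P → AC P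
  | conj : {P : MGraph} → AC P → AC P → AC P

/-- Satisfaction of an application condition by a morphism, where the extension
morphism `q` is required to be in the class `M` of injective morphisms. -/
def AC.Sat : {P G : MGraph} → (P ⟶ G) → AC P → Prop
  | _, _, _, AC.tru _ => True
  | _, G, p, AC.ex a c => ∃ q : _ ⟶ G, InjHom q ∧ a ≫ q = p ∧ AC.Sat q c
  | _, _, p, AC.neg c => ¬ AC.Sat p c
  | _, _, p, AC.conj c₁ c₂ => AC.Sat p c₁ ∧ AC.Sat p c₂

/-- All constituent graphs of an application condition are finite. -/
def AC.FinGraphs : {P : MGraph} → AC P → Prop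
  | _, AC.tru _ => True
  | _, AC.ex (Q := Q) _ c => Q.Fin ∧ AC.FinGraphs c
  | _, AC.neg c => AC.FinGraphs c
  | _, AC.conj c₁ c₂ => AC.FinGraphs c₁ ∧ AC.FinGraphs c₂

/-- Equivalence of ACs: exactly the same morphisms satisfy them. -/
def AC.Equiv {P : MGraph} (c c' : AC P) : Prop :=
  ∀ {G : MGraph} (p : P ⟶ G), AC.Sat p c ↔ AC.Sat p c'

/-- A rule with application condition. -/
structure Rule : Type 1 where
  p : PlainRule MGraph
  ac : AC p.L

/-- A rule is finite if its rule graphs and the constituent graphs of its AC are. -/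
def RuleFin (ρ : Rule) : Prop :=
  ρ.p.L.Fin ∧ ρ.p.I.Fin ∧ ρ.p.R.Fin ∧ AC.FinGraphs ρ.ac

/-- A transformation pair via rules with ACs: the matches satisfy the rule ACs. -/
structure RTrafoPair (ρ₁ ρ₂ : Rule) : Type 1 where
  tp : TrafoPair ρ₁.p ρ₂.p
  sat₁ : AC.Sat tp.t₁.m ρ₁.ac
  sat₂ : AC.Sat tp.t₂.m ρ₂.ac

/-- Parallel independence for transformations via rules with ACs. -/
def RParallelIndep (ρ₁ ρ₂ : Rule) (tp : TrafoPair ρ₁.p ρ₂.p) : Prop :=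
  (∃ d₁₂ : ρ₁.p.L ⟶ tp.t₂.D, d₁₂ ≫ tp.t₂.k = tp.t₁.m ∧
      AC.Sat (d₁₂ ≫ tp.t₂.c) ρ₁.ac) ∧
  (∃ d₂₁ : ρ₂.p.L ⟶ tp.t₁.D, d₂₁ ≫ tp.t₁.k = tp.t₂.m ∧
      AC.Sat (d₂₁ ≫ tp.t₁.c) ρ₂.ac)

/-! ### Auxiliary machinery for the Shift construction -/

instance instFiniteSetoid (X : Type) [Finite X] : Finite (Setoid X) :=
  Finite.of_injective (fun s => ⇑s) (fun s t h => Setoid.ext fun a b => by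
    simp only at h; rw [show (⇑s : X → X → Prop) = ⇑t from h])

/-- Injective morphisms compose. -/
lemma InjHom.comp {G H K : MGraph} {f : G ⟶ H} {g : H ⟶ K}
    (hf : InjHom f) (hg : InjHom g) : InjHom (f ≫ g) :=
  ⟨hg.1.comp hf.1, hg.2.comp hf.2⟩

/-- Finite conjunction of a list of ACs. -/
def AC.bigAnd {P : MGraph} : List (AC P) → AC P
  | [] => AC.tru P
  | x :: l => AC.conj x (AC.bigAnd l)

lemma AC.sat_bigAnd {P G : MGraph} (n : P ⟶ G) (l : List (AC P)) :
    AC.Sat n (AC.bigAnd l) ↔ ∀ x ∈ l, AC.Sat n x := by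
  induction l with
  | nil => simp [AC.bigAnd, AC.Sat]
  | cons x l ih => simp [AC.bigAnd, AC.Sat, ih]

lemma AC.finGraphs_bigAnd {P : MGraph} (l : List (AC P)) :
    AC.FinGraphs (AC.bigAnd l) ↔ ∀ x ∈ l, AC.FinGraphs x := by
  induction l with
  | nil => simp [AC.bigAnd, AC.FinGraphs]
  | cons x l ih => simp [AC.bigAnd, AC.FinGraphs, ih]

/-- Finite disjunction of a list of ACs. -/
def AC.bigOr {P : MGraph} (l : List (AC P)) : AC P :=
  AC.neg (AC.bigAnd (l.map AC.neg))

lemma AC.sat_bigOr {P G : MGraph} (n : P ⟶ G) (l : List (AC P)) :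
    AC.Sat n (AC.bigOr l) ↔ ∃ x ∈ l, AC.Sat n x := by
  show ¬ _ ↔ _
  rw [AC.sat_bigAnd]
  push_neg
  constructor
  · rintro ⟨x, hx, hsat⟩
    simp only [List.mem_map] at hx
    obtain ⟨y, hy, rfl⟩ := hx
    exact ⟨y, hy, not_not.mp hsat⟩
  · rintro ⟨y, hy, hsat⟩
    exact ⟨AC.neg y, List.mem_map_of_mem hy, fun h => h hsat⟩

lemma AC.finGraphs_bigOr {P : MGraph} (l : List (AC P)) :
    (∀ x ∈ l, AC.FinGraphs x) → AC.FinGraphs (AC.bigOr l) := by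
  intro h
  show AC.FinGraphs (AC.bigAnd _)
  rw [AC.finGraphs_bigAnd]
  intro x hx
  simp only [List.mem_map] at hx
  obtain ⟨y, hy, rfl⟩ := hx
  exact h y hy

namespace ShiftAux

variable {P P' Q : MGraph} (a : P ⟶ Q) (b : P ⟶ P')

/-- Source map on the disjoint union of edges. -/
def srcMap (P' Q : MGraph) : P'.E ⊕ Q.E → P'.V ⊕ Q.V := Sum.map P'.s Q.s

/-- Target map on the disjoint union of edges. -/
def tgtMap (P' Q : MGraph) : P'.E ⊕ Q.E → P'.V ⊕ Q.V := Sum.map P'.t Q.t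

/-- The index type for the disjunction in the Shift construction: a pair of
setoids on the disjoint unions of vertices and edges, compatible with sources
and targets, injective on the `Q`-side, and making the square commute. -/
structure Idx (a : P ⟶ Q) (b : P ⟶ P') : Type where
  sV : Setoid (P'.V ⊕ Q.V)
  sE : Setoid (P'.E ⊕ Q.E)
  compat_s : ∀ e₁ e₂, sE.r e₁ e₂ → sV.r (srcMap P' Q e₁) (srcMap P' Q e₂)
  compat_t : ∀ e₁ e₂, sE.r e₁ e₂ → sV.r (tgtMap P' Q e₁) (tgtMap P' Q e₂)
  injV : ∀ x y : Q.V, sV.r (Sum.inr x) (Sum.inr y) → x = y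
  injE : ∀ x y : Q.E, sE.r (Sum.inr x) (Sum.inr y) → x = y
  sqV : ∀ v : P.V, sV.r (Sum.inl (b.onV v)) (Sum.inr (a.onV v))
  sqE : ∀ e : P.E, sE.r (Sum.inl (b.onE e)) (Sum.inr (a.onE e))

instance [Finite P'.V] [Finite P'.E] [Finite Q.V] [Finite Q.E] :
    Finite (Idx a b) := by
  apply Finite.of_injective (fun i => (i.sV, i.sE))
  rintro ⟨⟩ ⟨⟩ h
  simp only [Prod.mk.injEq] at h
  obtain ⟨h1, h2⟩ := h
  subst h1; subst h2; rfl

variable {a b}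

/-- The overlap graph determined by an index. -/
noncomputable def Idx.graph (i : Idx a b) : MGraph where
  V := Quotient i.sV
  E := Quotient i.sE
  s := fun e => Quotient.mk i.sV (srcMap P' Q (Quotient.out e))
  t := fun e => Quotient.mk i.sV (tgtMap P' Q (Quotient.out e))

lemma Idx.graph_s_mk (i : Idx a b) (e : P'.E ⊕ Q.E) :
    i.graph.s (Quotient.mk i.sE e) = Quotient.mk i.sV (srcMap P' Q e) := by
  apply Quotient.sound
  exact i.compat_s _ _ (Quotient.exact (Quotient.out_eq (Quotient.mk i.sE e)))

lemma Idx.graph_t_mk (i : Idx a b) (e : P'.E ⊕ Q.E) :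
    i.graph.t (Quotient.mk i.sE e) = Quotient.mk i.sV (tgtMap P' Q e) := by
  apply Quotient.sound
  exact i.compat_t _ _ (Quotient.exact (Quotient.out_eq (Quotient.mk i.sE e)))

/-- The morphism `P' ⟶ i.graph`. -/
noncomputable def Idx.aHom (i : Idx a b) : P' ⟶ i.graph where
  onV := fun v => Quotient.mk i.sV (Sum.inl v)
  onE := fun e => Quotient.mk i.sE (Sum.inl e)
  comm_s := fun e => i.graph_s_mk (Sum.inl e)
  comm_t := fun e => i.graph_t_mk (Sum.inl e)

/-- The morphism `Q ⟶ i.graph`. -/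
noncomputable def Idx.bHom (i : Idx a b) : Q ⟶ i.graph where
  onV := fun v => Quotient.mk i.sV (Sum.inr v)
  onE := fun e => Quotient.mk i.sE (Sum.inr e)
  comm_s := fun e => i.graph_s_mk (Sum.inr e)
  comm_t := fun e => i.graph_t_mk (Sum.inr e)

lemma Idx.square (i : Idx a b) : a ≫ i.bHom = b ≫ i.aHom := by
  apply MGraph.hom_ext'
  · funext v; exact (Quotient.sound (i.sqV v)).symm
  · funext e; exact (Quotient.sound (i.sqE e)).symm

lemma Idx.bHom_inj (i : Idx a b) : InjHom i.bHom :=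
  ⟨fun x y h => i.injV x y (Quotient.exact h),
   fun x y h => i.injE x y (Quotient.exact h)⟩

lemma Idx.graph_fin (i : Idx a b) (hP' : P'.Fin) (hQ : Q.Fin) : i.graph.Fin := by
  have := hP'.1; have := hP'.2; have := hQ.1; have := hQ.2
  exact ⟨Quotient.finite _, Quotient.finite _⟩

/-- The index obtained from a concrete instance `(n, q)` by taking kernels. -/
def kerIdx {H : MGraph} (n : P' ⟶ H) (q : Q ⟶ H) (hq : InjHom q)
    (hsq : a ≫ q = b ≫ n) : Idx a b where
  sV := Setoid.ker (Sum.elim n.onV q.onV)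
  sE := Setoid.ker (Sum.elim n.onE q.onE)
  compat_s := fun e₁ e₂ h => by
    have key : ∀ e : P'.E ⊕ Q.E,
        Sum.elim n.onV q.onV (srcMap P' Q e) = H.s (Sum.elim n.onE q.onE e) := by
      rintro (e | e) <;> simp [srcMap, MGraphHom.comm_s]
    show Sum.elim n.onV q.onV _ = Sum.elim n.onV q.onV _
    rw [key, key]
    exact congrArg H.s h
  compat_t := fun e₁ e₂ h => by
    have key : ∀ e : P'.E ⊕ Q.E,
        Sum.elim n.onV q.onV (tgtMap P' Q e) = H.t (Sum.elim n.onE q.onE e) := by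
      rintro (e | e) <;> simp [tgtMap, MGraphHom.comm_t]
    show Sum.elim n.onV q.onV _ = Sum.elim n.onV q.onV _
    rw [key, key]
    exact congrArg H.t h
  injV := fun x y h => hq.1 h
  injE := fun x y h => hq.2 h
  sqV := fun v => (congrFun (congrArg MGraphHom.onV hsq) v).symm
  sqE := fun e => (congrFun (congrArg MGraphHom.onE hsq) e).symm

/-- The induced morphism from the kernel overlap graph into `H`. -/
def kerHom {H : MGraph} (n : P' ⟶ H) (q : Q ⟶ H) (hq : InjHom q)
    (hsq : a ≫ q = b ≫ n) : (kerIdx n q hq hsq).graph ⟶ H where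
  onV := Quotient.lift (Sum.elim n.onV q.onV) (fun _ _ h => h)
  onE := Quotient.lift (Sum.elim n.onE q.onE) (fun _ _ h => h)
  comm_s := fun e' => by
    have key : ∀ e : P'.E ⊕ Q.E,
        Sum.elim n.onV q.onV (srcMap P' Q e) = H.s (Sum.elim n.onE q.onE e) := by
      rintro (e | e) <;> simp [srcMap, MGraphHom.comm_s]
    conv_lhs => rw [← Quotient.out_eq e']
    exact (key (Quotient.out e')).symm
  comm_t := fun e' => by
    have key : ∀ e : P'.E ⊕ Q.E,
        Sum.elim n.onV q.onV (tgtMap P' Q e) = H.t (Sum.elim n.onE q.onE e) := by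
      rintro (e | e) <;> simp [tgtMap, MGraphHom.comm_t]
    conv_lhs => rw [← Quotient.out_eq e']
    exact (key (Quotient.out e')).symm

lemma kerHom_inj {H : MGraph} (n : P' ⟶ H) (q : Q ⟶ H) (hq : InjHom q)
    (hsq : a ≫ q = b ≫ n) : InjHom (kerHom n q hq hsq) := by
  constructor
  · intro x y
    induction x using Quotient.ind
    induction y using Quotient.ind
    exact fun h => Quotient.sound h
  · intro x y
    induction x using Quotient.ind
    induction y using Quotient.ind
    exact fun h => Quotient.sound h

lemma aHom_kerHom {H : MGraph} (n : P' ⟶ H) (q : Q ⟶ H) (hq : InjHom q)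
    (hsq : a ≫ q = b ≫ n) : (kerIdx n q hq hsq).aHom ≫ kerHom n q hq hsq = n :=
  MGraph.hom_ext' (funext fun _ => rfl) (funext fun _ => rfl)

lemma bHom_kerHom {H : MGraph} (n : P' ⟶ H) (q : Q ⟶ H) (hq : InjHom q)
    (hsq : a ≫ q = b ≫ n) : (kerIdx n q hq hsq).bHom ≫ kerHom n q hq hsq = q :=
  MGraph.hom_ext' (funext fun _ => rfl) (funext fun _ => rfl)

end ShiftAux

/-- Shift, by induction on the structure of the application condition. -/
lemma shift_aux : ∀ {P : MGraph} (ac : AC P), AC.FinGraphs ac →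
    ∀ {P' : MGraph}, P'.Fin → ∀ (b : P ⟶ P'),
    ∃ ac' : AC P', AC.FinGraphs ac' ∧
      ∀ (H : MGraph) (n : P' ⟶ H), AC.Sat (b ≫ n) ac ↔ AC.Sat n ac' := by
  intro P ac
  induction ac with
  | tru P =>
    intro _ P' _ b
    exact ⟨AC.tru P', trivial, fun H n => Iff.rfl⟩
  | neg c ih =>
    intro hac P' hP' b
    obtain ⟨ac', h1, h2⟩ := ih hac hP' b
    exact ⟨AC.neg ac', h1, fun H n => not_congr (h2 H n)⟩
  | conj c₁ c₂ ih₁ ih₂ =>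
    intro hac P' hP' b
    obtain ⟨ac₁, h11, h12⟩ := ih₁ hac.1 hP' b
    obtain ⟨ac₂, h21, h22⟩ := ih₂ hac.2 hP' b
    exact ⟨AC.conj ac₁ ac₂, ⟨h11, h21⟩, fun H n => and_congr (h12 H n) (h22 H n)⟩
  | ex a c ih =>
    intro hac P' hP' b
    obtain ⟨hQ, hc⟩ := hac
    -- choose a shifted AC for every index
    have hchoice : ∀ i : ShiftAux.Idx a b, ∃ ac' : AC i.graph,
        AC.FinGraphs ac' ∧
        ∀ (H : MGraph) (n : i.graph ⟶ H), AC.Sat (i.bHom ≫ n) c ↔ AC.Sat n ac' :=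
      fun i => ih hc (i.graph_fin hP' hQ) i.bHom
    classical
    choose acFor hacFor hsatFor using hchoice
    have := hP'.1; have := hP'.2; have := hQ.1; have := hQ.2
    haveI : Finite (ShiftAux.Idx a b) := inferInstance
    haveI : Fintype (ShiftAux.Idx a b) := Fintype.ofFinite _
    set l : List (AC P') :=
      (Finset.univ : Finset (ShiftAux.Idx a b)).toList.map
        (fun i => AC.ex i.aHom (acFor i)) with hl
    refine ⟨AC.bigOr l, ?_, ?_⟩
    · apply AC.finGraphs_bigOr
      intro x hx
      simp only [hl, List.mem_map] at hx
      obtain ⟨i, _, rfl⟩ := hx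
      exact ⟨i.graph_fin hP' hQ, hacFor i⟩
    · intro H n
      rw [AC.sat_bigOr]
      constructor
      · rintro ⟨q, hq, hcomm, hsat⟩
        set i := ShiftAux.kerIdx n q hq hcomm with hi
        refine ⟨AC.ex i.aHom (acFor i), ?_, ?_⟩
        · simp only [hl, List.mem_map]
          exact ⟨i, Finset.mem_toList.mpr (Finset.mem_univ i), rfl⟩
        · refine ⟨ShiftAux.kerHom n q hq hcomm, ShiftAux.kerHom_inj n q hq hcomm,
            ShiftAux.aHom_kerHom n q hq hcomm, ?_⟩
          rw [← hsatFor i H (ShiftAux.kerHom n q hq hcomm),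
            ShiftAux.bHom_kerHom n q hq hcomm]
          exact hsat
      · rintro ⟨x, hx, hsat⟩
        simp only [hl, List.mem_map] at hx
        obtain ⟨i, _, rfl⟩ := hx
        obtain ⟨q', hq', hcomm', hsat'⟩ := hsat
        refine ⟨i.bHom ≫ q', (i.bHom_inj).comp hq', ?_, ?_⟩
        · rw [← Category.assoc, i.square, Category.assoc, hcomm']
        · rw [hsatFor i H q']
          exact hsat'

/-- Shifting of application conditions over morphisms in the category of directed
multigraphs: for every AC `ac` over a finite graph `P` with finite constituent graphs
and every morphism `b : P ⟶ P'` with `P'` finite, there is an AC over `P'` (again with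
finite constituent graphs) that is satisfied by `n : P' ⟶ H` iff `n ∘ b` satisfies
`ac`. -/
theorem shift_of_ACs_over_morphisms
    {P P' : MGraph} (hP : P.Fin) (hP' : P'.Fin)
    (ac : AC P) (hac : AC.FinGraphs ac) (b : P ⟶ P') :
    ∃ ac' : AC P', AC.FinGraphs ac' ∧
      ∀ (H : MGraph) (n : P' ⟶ H), AC.Sat (b ≫ n) ac ↔ AC.Sat n ac' :=
  shift_aux ac hac hP' b
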